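/- arXiv:2310.03282 — 12 statements merged into one kernel-verified Lean document; each statement's English description precedes it below -/
import Mathlib

section
/- If a family of complex numbers (a_m)_{m ∈ ℤ} and a fixed γ ∈ ℤ satisfy 2(m−n)·a_{m+n} = (m+γ−n)·a_m + (m−n−γ)·a_n for all m, n ∈ ℤ, then a_m = a_0 for all m ∈ ℤ. -/
theorem half_derivation_coeff_L
    (a : ℤ → ℂ) (γ : ℤ)
    (h : ∀ m n : ℤ, 2 * ((m - n : ℤ) : ℂ) * a (m + n)
        = ((m + γ - n : ℤ) : ℂ) * a m + ((m - n - γ : ℤ) : ℂ) * a n) :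
    ∀ m : ℤ, a m = a 0 := by
  have castne : ∀ x y : ℤ, x ≠ y → ((x : ℂ) - y) ≠ 0 := by
    intro x y hxy e
    exact hxy (by exact_mod_cast sub_eq_zero.mp e)
  have key : ∀ m : ℤ, m ≠ γ → a m = a 0 := by
    intro m hm
    have h0 := h m 0
    simp only [add_zero] at h0
    push_cast at h0
    have hc : ((m : ℂ) - γ) ≠ 0 := castne m γ hm
    have hmain : ((m : ℂ) - γ) * a m = ((m : ℂ) - γ) * a 0 := by
      linear_combination h0
    exact mul_left_cancel₀ hc hmain
  intro m
  by_cases hm : m = γ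
  · rw [hm]
    by_cases hγ1 : γ = -1
    · rw [hγ1]
      rw [hγ1] at h
      have key' : ∀ k : ℤ, k ≠ -1 → a k = a 0 := fun k hk => key k (hγ1 ▸ hk)
      have h1 := h (-2) 1
      push_cast at h1
      have e1 : a (-2) = a 0 := key' (-2) (by norm_num)
      have e2 : a 1 = a 0 := key' 1 (by norm_num)
      rw [e1, e2] at h1
      norm_num at h1
      linear_combination -h1 / 6
    · by_cases hγ2 : γ = -2
      · rw [hγ2]
        rw [hγ2] at h
        have key' : ∀ k : ℤ, k ≠ -2 → a k = a 0 := fun k hk => key k (hγ2 ▸ hk)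
        have h1 := h (-3) 1
        push_cast at h1
        have e1 : a (-3) = a 0 := key' (-3) (by norm_num)
        have e2 : a 1 = a 0 := key' 1 (by norm_num)
        rw [e1, e2] at h1
        norm_num at h1
        linear_combination -h1 / 8
      · have h1 := h (γ + 1) (-1)
        push_cast at h1
        have e1 : a (γ + 1) = a 0 := key (γ + 1) (by omega)
        have e2 : a (-1) = a 0 := key (-1) (by omega)
        have hsum : γ + 1 + -1 = γ := by ring
        rw [hsum, e1, e2] at h1
        have hc : ((γ : ℂ) + 2) ≠ 0 := by
          have := castne γ (-2) hγ2
          push_cast at this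
          intro e; apply this; linear_combination e
        have hmain : ((γ : ℂ) + 2) * a γ = ((γ : ℂ) + 2) * a 0 := by
          linear_combination h1 / 2
        exact mul_left_cancel₀ hc hmain
  · exact key m hm
end

section
/- If a family (z_m)_{m ∈ ℤ} of complex numbers and γ ∈ ℤ satisfy 2(m−n)·z_{m+n} = (m−n−γ)·z_n for all m, n ∈ ℤ, then z_m = 0 for all m ∈ ℤ. -/
theorem half_derivation_coeff_z
    (z : ℤ → ℂ) (γ : ℤ)
    (h : ∀ m n : ℤ, 2 * ((m - n : ℤ) : ℂ) * z (m + n)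
        = ((m - n - γ : ℤ) : ℂ) * z n) :
    ∀ m : ℤ, z m = 0 := by
  by_cases hγ : γ = 0
  · subst hγ
    -- key: for k ≠ 2n, 2 * z k = z n
    have key : ∀ k n : ℤ, k ≠ 2 * n → 2 * z k = z n := by
      intro k n hk
      have := h (k - n) n
      have hc : ((k - n - n : ℤ) : ℂ) ≠ 0 := by
        simp only [ne_eq, Int.cast_eq_zero]
        omega
      rw [show k - n + n = k by ring] at this
      have h2 : ((k - n - n : ℤ) : ℂ) * (2 * z k) = ((k - n - n : ℤ) : ℂ) * z n := by
        push_cast at this ⊢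
        linear_combination this
      exact mul_left_cancel₀ hc h2
    have h10 : 2 * z 1 = z 0 := key 1 0 (by norm_num)
    have h30 : 2 * z 3 = z 0 := key 3 0 (by norm_num)
    have h31 : 2 * z 3 = z 1 := key 3 1 (by norm_num)
    have hz1 : z 1 = 0 := by linear_combination h10 - h30 + h31
    have hz0 : z 0 = 0 := by linear_combination h31 - h30 + hz1
    intro m
    by_cases hm : m = 0
    · rw [hm]; exact hz0
    · have := key m 0 (by omega)
      rw [hz0] at this
      have : (2 : ℂ) * z m = 0 := this
      simpa using this
  · intro m
    have := h m m
    simp only [sub_self, zero_sub, Int.cast_neg] at this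
    have hc : ((γ : ℂ)) ≠ 0 := by exact_mod_cast hγ
    have : -(γ : ℂ) * z m = 0 := by
      rw [← this]; push_cast; ring
    rcases mul_eq_zero.mp this with h1 | h1
    · exact absurd (neg_eq_zero.mp h1) hc
    · exact h1
end

section
/- If a family (w_m)_{m ∈ ℤ} of complex numbers and γ ∈ ℤ satisfy 2(m−n)·w_{m+n} = (−n−γ)·w_n for all m, n ∈ ℤ, then w_m = 0 for all m ∈ ℤ. -/
theorem half_derivation_coeff_w
    (w : ℤ → ℂ) (γ : ℤ)
    (h : ∀ m n : ℤ, 2 * ((m - n : ℤ) : ℂ) * w (m + n)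
        = ((-n - γ : ℤ) : ℂ) * w n) :
    ∀ m : ℤ, w m = 0 := by
  have key : ∀ n : ℤ, ((-n - γ : ℤ) : ℂ) * w n = 0 := by
    intro n
    have := h n n
    simpa using this.symm
  have hne : ∀ n : ℤ, n ≠ -γ → w n = 0 := by
    intro n hn
    have := key n
    have hc : ((-n - γ : ℤ) : ℂ) ≠ 0 := by
      simp only [ne_eq, Int.cast_eq_zero]
      omega
    exact (mul_eq_zero.mp this).resolve_left hc
  intro m
  by_cases hm : m = -γ
  · subst hm
    by_cases hγ : γ = 0
    · subst hγ
      have := h (-1) 1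
      simp only [neg_zero, Int.cast_zero] at this ⊢
      have h1 : w 1 = 0 := hne 1 (by omega)
      rw [h1, mul_zero] at this
      have : (2 : ℂ) * ((-1 - 1 : ℤ) : ℂ) * w 0 = 0 := by
        simpa using this
      have h2 : (2 : ℂ) * ((-1 - 1 : ℤ) : ℂ) ≠ 0 := by norm_num
      exact (mul_eq_zero.mp this).resolve_left h2
    · have := h 0 (-γ)
      simp only [sub_neg_eq_add, zero_add, neg_neg, sub_self, Int.cast_zero,
        zero_mul] at this
      have h2 : (2 : ℂ) * (γ : ℂ) ≠ 0 := by
        simp only [ne_eq, mul_eq_zero, Int.cast_eq_zero]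
        push_neg
        constructor <;> [norm_num; omega]
      exact (mul_eq_zero.mp this).resolve_left h2
  · exact hne m hm
end

section
/- If families (a_m), (b_m) of complex numbers and γ ∈ ℤ satisfy −2n·b_{m+n} = −n·a + (−n−γ)·b_n for all m, n ∈ ℤ (where a ∈ ℂ is a fixed constant), then b_m = b_n for all m, n ∈ ℤ; moreover if γ ≠ 0 then a = 0 and b_m = 0 for all m, while if γ = 0 then b_m = a for all m. -/
theorem half_derivation_coeff_b
    (a : ℂ) (b : ℤ → ℂ) (γ : ℤ)
    (h : ∀ m n : ℤ, -2 * (n : ℂ) * b (m + n)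
        = -(n : ℂ) * a + ((-n - γ : ℤ) : ℂ) * b n) :
    (∀ m n : ℤ, b m = b n) ∧
    (γ ≠ 0 → a = 0 ∧ ∀ m : ℤ, b m = 0) ∧
    (γ = 0 → ∀ m : ℤ, b m = a) := by
  have hb : ∀ m : ℤ, b m = b 0 := by
    intro m
    have h1 := h (m - 1) 1
    have h2 := h (-1) 1
    simp only [sub_add_cancel, neg_add_cancel] at h1 h2
    have := h1.trans h2.symm
    push_cast at this
    linear_combination (-1/2 : ℂ) * this
  have hγ : (γ : ℂ) * b 0 = 0 := by
    have := h 0 0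
    push_cast at this
    linear_combination this
  have ha : a = b 0 := by
    have := h 0 1
    rw [hb (0 + 1), hb 1] at this
    push_cast at this
    linear_combination this - hγ
  refine ⟨fun m n => (hb m).trans (hb n).symm, fun hg => ?_, fun hg => ?_⟩
  · have hb0 : b 0 = 0 := by
      have : (γ : ℂ) ≠ 0 := Int.cast_ne_zero.mpr hg
      exact (mul_eq_zero.mp hγ).resolve_left this
    exact ⟨ha.trans hb0, fun m => (hb m).trans hb0⟩
  · exact fun m => (hb m).trans ha.symm
end

section
/- If h ∈ ℂ, (e_m)_{m ∈ ℤ} in ℂ, and γ ∈ ℤ satisfy −2n·e_{m+n} = h + (m−n−γ)·e_n for all m, n ∈ ℤ, then h = 0 and e_m = 0 for all m ∈ ℤ. -/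
theorem half_derivation_coeff_he
    (h : ℂ) (e : ℤ → ℂ) (γ : ℤ)
    (heq : ∀ m n : ℤ, -2 * (n : ℂ) * e (m + n)
        = h + ((m - n - γ : ℤ) : ℂ) * e n) :
    h = 0 ∧ ∀ m : ℤ, e m = 0 := by
  have h0 : h = 0 := by
    have := heq γ 0
    symm; simpa using this
  subst h0
  have he2 : ∀ t : ℤ, t ≠ 0 → e (2 * t + γ) = 0 := by
    intro t ht
    have := heq (t + γ) t
    have h1 : t + γ - t - γ = 0 := by ring
    rw [h1] at this
    simp only [Int.cast_zero, zero_mul, zero_add, add_zero] at this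
    have h2 : t + γ + t = 2 * t + γ := by ring
    rw [h2] at this
    have htC : (t : ℂ) ≠ 0 := Int.cast_ne_zero.mpr ht
    rcases mul_eq_zero.mp this with h3 | h3
    · exact absurd (by simpa using h3) htC
    · exact h3
  refine ⟨rfl, fun k => ?_⟩
  obtain ⟨t, ht, hn⟩ : ∃ t : ℤ, t ≠ 0 ∧ 2 * t + γ ≠ 0 := by
    by_cases hγ : γ = -2
    · exact ⟨2, by norm_num, by omega⟩
    · exact ⟨1, by norm_num, by omega⟩
  set n := 2 * t + γ with hndef
  have := heq (k - n) n
  rw [he2 t ht] at this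
  have h1 : k - n + n = k := by ring
  rw [h1] at this
  simp only [mul_zero, add_zero, zero_add] at this
  have hnC : (n : ℂ) ≠ 0 := Int.cast_ne_zero.mpr hn
  have := this
  rcases mul_eq_zero.mp this with h3 | h3
  · exact absurd (by simpa using h3) hnC
  · exact h3
end

section
/- If a family (j_m)_{m ∈ ℤ} of complex numbers and γ ∈ ℤ satisfy −2n·j_{m+n} = (m−n−γ)·j_n for all m, n ∈ ℤ, then j_m = 0 for all m ∈ ℤ. -/
theorem half_derivation_coeff_j
    (j : ℤ → ℂ) (γ : ℤ)
    (h : ∀ m n : ℤ, -2 * (n : ℂ) * j (m + n)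
        = ((m - n - γ : ℤ) : ℂ) * j n) :
    ∀ m : ℤ, j m = 0 := by
  have hj0 : j 0 = 0 := by
    have := h (γ + 1) 0
    simpa using this.symm
  have key : ∀ t : ℤ, (-t - t - γ : ℤ) ≠ 0 → j t = 0 := by
    intro t ht
    have := h (-t) t
    rw [neg_add_cancel, hj0, mul_zero] at this
    have hc : ((-t - t - γ : ℤ) : ℂ) ≠ 0 := by exact_mod_cast ht
    exact (mul_eq_zero.mp this.symm).resolve_left hc
  intro m
  by_cases hm : (-m - m - γ : ℤ) ≠ 0
  · exact key m hm
  · push_neg at hm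
    have hγ : γ = -2 * m := by omega
    by_cases hm0 : m = 0
    · subst hm0; exact hj0
    · have h2m : j (2 * m) = 0 := by
        apply key
        omega
      have := h m m
      rw [show m + m = 2 * m by ring, h2m, mul_zero] at this
      have hc : ((m - m - γ : ℤ) : ℂ) ≠ 0 := by
        have : (m - m - γ : ℤ) ≠ 0 := by omega
        exact_mod_cast this
      exact (mul_eq_zero.mp this.symm).resolve_left hc
end

section
/- If families (i_m), (k_m) of complex numbers and γ ∈ ℤ satisfy 2(m−n)·k_{m+n} = i_m + (m−n−γ)·k_n for all m, n ∈ ℤ, then i_0 = 0 and k_n = 0 for all n ∈ ℤ. -/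
theorem half_derivation_coeff_ik
    (i k : ℤ → ℂ) (γ : ℤ)
    (h : ∀ m n : ℤ, 2 * ((m - n : ℤ) : ℂ) * k (m + n)
        = i m + ((m - n - γ : ℤ) : ℂ) * k n) :
    i 0 = 0 ∧ ∀ n : ℤ, k n = 0 := by
  have hk0 : k 0 = 0 := by
    have e1 := h 0 0; have e2 := h 0 1; have e3 := h 1 0; have e4 := h 1 1
    push_cast at e1 e2 e3 e4
    norm_num at e1 e2 e3 e4
    linear_combination (2 - (γ:ℂ)) * e1 + ((γ:ℂ) - 2) * e2 + ((γ:ℂ) - 1) * e3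
      + (1 - (γ:ℂ)) * e4
  have hi0 : i 0 = 0 := by
    have e1 := h 0 0; push_cast at e1; norm_num at e1
    linear_combination -e1 + (γ:ℂ) * hk0
  refine ⟨hi0, fun n => ?_⟩
  rcases eq_or_ne n 0 with rfl | hn
  · exact hk0
  · have hn' : (n:ℂ) ≠ 0 := Int.cast_ne_zero.mpr hn
    have eA := h 0 n; have eB := h n 0; have eC := h n n
    push_cast at eA eB eC
    norm_num at eA eB eC
    have key : (n:ℂ) * k n = 0 := by
      linear_combination eA + eB - eC + hi0 + ((n:ℂ) - γ) * hk0
    exact (mul_eq_zero.mp key).resolve_left hn'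
end

section
/- If a family (i_m)_{m ∈ ℤ} of complex numbers and γ ∈ ℤ satisfy 2(m−n)·i_{m+n} = (m+γ)·i_m + (−n−γ)·i_n for all m, n ∈ ℤ, together with the constraint that for every n ∈ ℤ there exists k_n ∈ ℂ with (γ−n)·k_n = i_0 forcing i_0 = 0 when γ = 0, then i_m = 0 for all m ∈ ℤ. -/
theorem half_derivation_coeff_i
    (i : ℤ → ℂ) (γ : ℤ)
    (h : ∀ m n : ℤ, 2 * ((m - n : ℤ) : ℂ) * i (m + n)
        = ((m + γ : ℤ) : ℂ) * i m + ((-n - γ : ℤ) : ℂ) * i n)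
    (hk : ∃ k : ℤ → ℂ, ∀ m n : ℤ, 2 * ((m - n : ℤ) : ℂ) * k (m + n)
        = i m + ((m - n - γ : ℤ) : ℂ) * k n) :
    ∀ m : ℤ, i m = 0 := by
  obtain ⟨k, hk⟩ := hk
  have key : ∀ p : ℤ, i p = (γ : ℂ) * k p := by
    intro p
    have hp := hk p p
    push_cast at hp
    linear_combination -hp
  intro m
  by_cases hγ : (γ : ℂ) = 0
  · rw [key m, hγ, zero_mul]
  · have h0γ := h 0 γ
    push_cast at h0γ; rw [zero_add] at h0γ
    have h0 : i 0 = 0 := by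
      have hgi : (γ : ℂ) * i 0 = 0 := by linear_combination -h0γ
      rcases mul_eq_zero.mp hgi with hc | hc
      · exact absurd hc hγ
      · exact hc
    by_cases hm : m = γ
    · subst hm
      have h1 := hk m 0
      push_cast at h1; rw [add_zero] at h1
      have h2 : (m : ℂ) * k m = 0 := by linear_combination h1 + key m
      rw [key m]
      exact h2
    · have h3 := h m 0
      push_cast at h3; rw [add_zero] at h3
      have h4 : ((m : ℂ) - γ) * i m = 0 := by
        linear_combination h3 - (γ : ℂ) * h0 + (γ : ℂ) * (h 0 0) - (γ:ℂ)*(h 0 0)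
      have hne : (m : ℂ) - γ ≠ 0 := sub_ne_zero.mpr (by exact_mod_cast hm)
      rcases mul_eq_zero.mp h4 with hc | hc
      · exact absurd hc hne
      · exact hc
end

section
/- Every homogeneous ½-derivation of the planar Galilean conformal algebra W of degree (0̄,0̄,γ) with γ ≠ 0 is zero. -/
/-- Index type for the basis of the planar Galilean conformal algebra. -/
inductive PGIdx : Type
  | L (m : ℤ) | H (m : ℤ) | I (m : ℤ) | J (m : ℤ)

open PGIdx in
/-- `W` together with a basis `b` satisfying these relations is
the planar Galilean conformal algebra. -/
def IsPlanarGCA (W : Type*) [LieRing W] [LieAlgebra ℂ W]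
    (b : Module.Basis PGIdx ℂ W) : Prop :=
  ∀ m n : ℤ,
    ⁅b (L m), b (L n)⁆ = ((m - n : ℤ) : ℂ) • b (L (m + n)) ∧
    ⁅b (L m), b (H n)⁆ = (-(n : ℂ)) • b (H (m + n)) ∧
    ⁅b (L m), b (I n)⁆ = ((m - n : ℤ) : ℂ) • b (I (m + n)) ∧
    ⁅b (L m), b (J n)⁆ = ((m - n : ℤ) : ℂ) • b (J (m + n)) ∧
    ⁅b (H m), b (I n)⁆ = b (J (m + n)) ∧
    ⁅b (H m), b (J n)⁆ = -b (I (m + n)) ∧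
    ⁅b (H m), b (H n)⁆ = 0 ∧
    ⁅b (I m), b (I n)⁆ = 0 ∧
    ⁅b (I m), b (J n)⁆ = 0 ∧
    ⁅b (J m), b (J n)⁆ = 0

/-- `φ` is a ½-derivation. -/
def IsHalfDerivation {W : Type*} [LieRing W] [LieAlgebra ℂ W]
    (φ : W →ₗ[ℂ] W) : Prop :=
  ∀ x y : W, φ ⁅x, y⁆ = (2 : ℂ)⁻¹ • (⁅φ x, y⁆ + ⁅x, φ y⁆)

open PGIdx in
theorem homogeneous_half_derivation_deg00_ne_zero_is_zero
    (W : Type*) [LieRing W] [LieAlgebra ℂ W]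
    (b : Module.Basis PGIdx ℂ W) (hW : IsPlanarGCA W b)
    (γ : ℤ) (hγ : γ ≠ 0)
    (D : W →ₗ[ℂ] W) (hD : IsHalfDerivation D)
    (hL : ∀ m : ℤ, ∃ c : ℂ, D (b (L m)) = c • b (L (m + γ)))
    (hH : ∀ m : ℤ, ∃ c : ℂ, D (b (H m)) = c • b (H (m + γ)))
    (hI : ∀ m : ℤ, ∃ c : ℂ, D (b (I m)) = c • b (I (m + γ)))
    (hJ : ∀ m : ℤ, ∃ c : ℂ, D (b (J m)) = c • b (J (m + γ))) :
    D = 0 := by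
  choose f hf using hL
  choose g hg using hH
  choose u hu using hI
  choose v hv using hJ
  have hinj : ∀ (k : PGIdx) (a c : ℂ), a • b k = c • b k → a = c :=
    fun k a c hh => smul_left_injective ℂ (b.ne_zero k) hh
  have hγC : (γ : ℂ) ≠ 0 := Int.cast_ne_zero.mpr hγ
  -- The L-L equation
  have EL : ∀ m n : ℤ, 2 * ((m : ℂ) - n) * f (m + n)
      = ((m : ℂ) + γ - n) * f m + ((m : ℂ) - n - γ) * f n := by
    intro m n
    have h1 := hD (b (L m)) (b (L n))
    rw [(hW m n).1, map_smul, hf (m + n), hf m, hf n, smul_lie, lie_smul,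
      (hW (m + γ) n).1, (hW m (n + γ)).1] at h1
    have e1 : m + γ + n = m + n + γ := by ring
    have e2 : m + (n + γ) = m + n + γ := by ring
    rw [e1, e2] at h1
    simp only [smul_smul] at h1
    rw [← add_smul, smul_smul] at h1
    have h2 := hinj _ _ _ h1
    push_cast at h2 ⊢
    linear_combination (2 : ℂ) * h2
  -- The L-H equation
  have EH : ∀ m n : ℤ, 2 * (n : ℂ) * g (m + n)
      = (n : ℂ) * f m + ((n : ℂ) + γ) * g n := by
    intro m n
    have h1 := hD (b (L m)) (b (H n))
    rw [(hW m n).2.1, map_smul, hg (m + n), hf m, hg n, smul_lie, lie_smul,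
      (hW (m + γ) n).2.1, (hW m (n + γ)).2.1] at h1
    have e1 : m + γ + n = m + n + γ := by ring
    have e2 : m + (n + γ) = m + n + γ := by ring
    rw [e1, e2] at h1
    simp only [smul_smul] at h1
    rw [← add_smul, smul_smul] at h1
    have h2 := hinj _ _ _ h1
    push_cast at h2 ⊢
    linear_combination (-2 : ℂ) * h2
  -- The L-I equation
  have EI : ∀ m n : ℤ, 2 * ((m : ℂ) - n) * u (m + n)
      = ((m : ℂ) + γ - n) * f m + ((m : ℂ) - n - γ) * u n := by
    intro m n
    have h1 := hD (b (L m)) (b (I n))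
    rw [(hW m n).2.2.1, map_smul, hu (m + n), hf m, hu n, smul_lie, lie_smul,
      (hW (m + γ) n).2.2.1, (hW m (n + γ)).2.2.1] at h1
    have e1 : m + γ + n = m + n + γ := by ring
    have e2 : m + (n + γ) = m + n + γ := by ring
    rw [e1, e2] at h1
    simp only [smul_smul] at h1
    rw [← add_smul, smul_smul] at h1
    have h2 := hinj _ _ _ h1
    push_cast at h2 ⊢
    linear_combination (2 : ℂ) * h2
  -- The L-J equation
  have EJ : ∀ m n : ℤ, 2 * ((m : ℂ) - n) * v (m + n)
      = ((m : ℂ) + γ - n) * f m + ((m : ℂ) - n - γ) * v n := by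
    intro m n
    have h1 := hD (b (L m)) (b (J n))
    rw [(hW m n).2.2.2.1, map_smul, hv (m + n), hf m, hv n, smul_lie, lie_smul,
      (hW (m + γ) n).2.2.2.1, (hW m (n + γ)).2.2.2.1] at h1
    have e1 : m + γ + n = m + n + γ := by ring
    have e2 : m + (n + γ) = m + n + γ := by ring
    rw [e1, e2] at h1
    simp only [smul_smul] at h1
    rw [← add_smul, smul_smul] at h1
    have h2 := hinj _ _ _ h1
    push_cast at h2 ⊢
    linear_combination (2 : ℂ) * h2
  -- f is constant away from γ
  have fc : ∀ m : ℤ, m ≠ γ → f m = f 0 := by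
    intro m hm
    have t := EL m 0
    rw [add_zero] at t
    have hne : ((m : ℂ) - γ) ≠ 0 := sub_ne_zero.mpr (by exact_mod_cast hm)
    have h2 : ((m : ℂ) - γ) * (f m - f 0) = 0 := by push_cast at t; linear_combination t
    rcases mul_eq_zero.mp h2 with h | h
    · exact absurd h hne
    · exact sub_eq_zero.mp h
  -- g 0 = 0
  have g0 : g 0 = 0 := by
    have t := EH 0 0
    norm_num at t
    rcases t with h | h
    · exact absurd h hγ
    · exact h
  -- g is constant, in two ways
  have gA : ∀ a : ℤ, a ≠ γ + 1 → 2 * g a = f 0 + (1 + (γ : ℂ)) * g 1 := by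
    intro a ha
    have t := EH (a - 1) 1
    have e : a - 1 + 1 = a := by ring
    rw [e, fc (a - 1) (by omega)] at t
    push_cast at t; linear_combination t
  have gB : ∀ a : ℤ, a ≠ γ + 2 → 4 * g a = 2 * f 0 + (2 + (γ : ℂ)) * g 2 := by
    intro a ha
    have t := EH (a - 2) 2
    have e : a - 2 + 2 = a := by ring
    rw [e, fc (a - 2) (by omega)] at t
    push_cast at t; linear_combination t
  have gconst : ∀ a : ℤ, g a = g (γ + 3) := by
    intro a
    by_cases hca : a = γ + 1
    · have t1 := gB a (by omega)
      have t2 := gB (γ + 3) (by omega)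
      linear_combination (t1 - t2) / 4
    · have t1 := gA a hca
      have t2 := gA (γ + 3) (by omega)
      linear_combination (t1 - t2) / 2
  have gz : ∀ a : ℤ, g a = 0 := by
    intro a
    have h03 := gconst 0
    rw [g0] at h03
    rw [gconst a, ← h03]
  have fz : ∀ m : ℤ, f m = 0 := by
    intro m
    have t := EH m 1
    rw [gz (m + 1), gz 1] at t
    push_cast at t
    linear_combination -t
  have key : ∀ (E : ∀ m n : ℤ, 2 * ((m : ℂ) - n) * u (m + n)
      = ((m : ℂ) + γ - n) * f m + ((m : ℂ) - n - γ) * u n), ∀ n : ℤ, u n = 0 := by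
    intro E n
    have keyn : ∀ k : ℤ, ((γ : ℂ) - k) * u k = 0 := by
      intro k
      have t := E 0 k
      rw [zero_add, fz 0] at t
      push_cast at t
      linear_combination t
    by_cases hn : n = γ
    · rw [hn]
      have h4 : u (3 * γ + γ) = 0 := by
        have hk := keyn (3 * γ + γ)
        have hne : ((γ : ℂ) - ((3 * γ + γ : ℤ) : ℂ)) ≠ 0 :=
          sub_ne_zero.mpr (by exact_mod_cast (by omega : γ ≠ 3 * γ + γ))
        exact (mul_eq_zero.mp hk).resolve_left hne
      have t := E (3 * γ) γ
      rw [fz (3 * γ), h4] at t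
      push_cast at t
      have hgu : (γ : ℂ) * u γ = 0 := by linear_combination -t
      exact (mul_eq_zero.mp hgu).resolve_left hγC
    · have hk := keyn n
      have hne : ((γ : ℂ) - (n : ℂ)) ≠ 0 :=
        sub_ne_zero.mpr (by exact_mod_cast (Ne.symm hn))
      exact (mul_eq_zero.mp hk).resolve_left hne
  have uz : ∀ n : ℤ, u n = 0 := key EI
  have vz : ∀ n : ℤ, v n = 0 := by
    -- same argument with u replaced by v
    have keyn : ∀ k : ℤ, ((γ : ℂ) - k) * v k = 0 := by
      intro k
      have t := EJ 0 k
      rw [zero_add, fz 0] at t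
      push_cast at t
      linear_combination t
    intro n
    by_cases hn : n = γ
    · rw [hn]
      have h4 : v (3 * γ + γ) = 0 := by
        have hk := keyn (3 * γ + γ)
        have hne : ((γ : ℂ) - ((3 * γ + γ : ℤ) : ℂ)) ≠ 0 :=
          sub_ne_zero.mpr (by exact_mod_cast (by omega : γ ≠ 3 * γ + γ))
        exact (mul_eq_zero.mp hk).resolve_left hne
      have t := EJ (3 * γ) γ
      rw [fz (3 * γ), h4] at t
      push_cast at t
      have hgu : (γ : ℂ) * v γ = 0 := by linear_combination -t
      exact (mul_eq_zero.mp hgu).resolve_left hγC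
    · have hk := keyn n
      have hne : ((γ : ℂ) - (n : ℂ)) ≠ 0 :=
        sub_ne_zero.mpr (by exact_mod_cast (Ne.symm hn))
      exact (mul_eq_zero.mp hk).resolve_left hne
  refine b.ext fun idx => ?_
  rcases idx with m | m | m | m <;>
    simp [hf, hg, hu, hv, fz, gz, uz, vz]
end

section
/- Every homogeneous ½-derivation of the planar Galilean conformal algebra W of degree (0̄,1̄,γ) is zero, for every γ ∈ ℤ. -/
open PGIdx in
theorem homogeneous_half_derivation_deg01_is_zero
    (W : Type*) [LieRing W] [LieAlgebra ℂ W]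
    (b : Module.Basis PGIdx ℂ W) (hW : IsPlanarGCA W b)
    (γ : ℤ)
    (D : W →ₗ[ℂ] W) (hD : IsHalfDerivation D)
    (hL : ∀ m : ℤ, ∃ c : ℂ, D (b (L m)) = c • b (I (m + γ)))
    (hH : ∀ m : ℤ, ∃ c : ℂ, D (b (H m)) = c • b (J (m + γ)))
    (hI : ∀ m : ℤ, ∃ c : ℂ, D (b (I m)) = c • b (L (m + γ)))
    (hJ : ∀ m : ℤ, ∃ c : ℂ, D (b (J m)) = c • b (H (m + γ))) :
    D = 0 := by
  classical
  choose cL hcL using hL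
  choose cH hcH using hH
  choose cI hcI using hI
  choose cJ hcJ using hJ
  have bne : ∀ (c : ℂ) (i : PGIdx), c • b i = 0 → c = 0 := by
    intro c i h
    rcases smul_eq_zero.mp h with h | h
    · exact h
    · exact absurd h (b.ne_zero i)
  have h2ne : (2:ℂ)⁻¹ ≠ 0 := by norm_num
  -- D vanishes on the J's
  have hDJ : ∀ n : ℤ, D (b (J n)) = 0 := by
    intro n
    have key := hD (b (H 0)) (b (I n))
    rw [(hW 0 n).2.2.2.2.1, hcH 0, hcI n] at key
    have e1 : ⁅b (J (0+γ)), b (I n)⁆ = 0 := by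
      rw [← lie_skew, (hW n (0+γ)).2.2.2.2.2.2.2.2.1, neg_zero]
    have e2 : ⁅b (H 0), b (L (n+γ))⁆ = 0 := by
      rw [← lie_skew, (hW (n+γ) 0).2.1]
      simp
    rw [lie_smul, smul_lie, e1, e2, smul_zero, smul_zero, add_zero, smul_zero,
      zero_add] at key
    exact key
  -- D vanishes on the I's
  have hDI : ∀ m : ℤ, D (b (I m)) = 0 := by
    intro m
    have key := hD (b (H 1)) (b (I m))
    rw [(hW 1 m).2.2.2.2.1, hDJ (1+m), hcH 1, hcI m] at key
    have e1 : ⁅b (J (1+γ)), b (I m)⁆ = 0 := by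
      rw [← lie_skew, (hW m (1+γ)).2.2.2.2.2.2.2.2.1, neg_zero]
    have e2 : ⁅b (H 1), b (L (m+γ))⁆ = b (H (1 + (m+γ))) := by
      rw [← lie_skew, (hW (m+γ) 1).2.1]
      have : m + γ + 1 = 1 + (m + γ) := by ring
      rw [this]
      simp
    rw [lie_smul, smul_lie, e1, e2, smul_zero, zero_add] at key
    have key2 : ((2:ℂ)⁻¹ * cI m) • b (H (1+(m+γ))) = 0 := by
      rw [mul_smul]; exact key.symm
    have hz := (mul_eq_zero.mp (bne _ _ key2)).resolve_left h2ne
    rw [hcI m, hz, zero_smul]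
  -- cH is constant
  have hHc : ∀ m n : ℤ, cH m = cH n := by
    intro m n
    have key := hD (b (H m)) (b (H n))
    rw [(hW m n).2.2.2.2.2.2.1, map_zero, hcH m, hcH n] at key
    have e1 : ⁅b (J (m+γ)), b (H n)⁆ = b (I (m+n+γ)) := by
      rw [← lie_skew, (hW n (m+γ)).2.2.2.2.2.1, neg_neg]
      have : n + (m+γ) = m+n+γ := by ring
      rw [this]
    have e2 : ⁅b (H m), b (J (n+γ))⁆ = -b (I (m+n+γ)) := by
      rw [(hW m (n+γ)).2.2.2.2.2.1]
      have : m + (n+γ) = m+n+γ := by ring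
      rw [this]
    rw [lie_smul, smul_lie, e1, e2, smul_neg] at key
    have key2 : ((2:ℂ)⁻¹ * (cH m - cH n)) • b (I (m+n+γ)) = 0 := by
      rw [mul_smul, sub_smul, ← sub_eq_add_neg] at *
      exact key.symm
    have hz := (mul_eq_zero.mp (bne _ _ key2)).resolve_left h2ne
    exact sub_eq_zero.mp hz
  -- the main scalar equation from ⁅L m, H n⁆
  have main : ∀ m n : ℤ,
      (-(n:ℂ)) * cH (m+n) - (2:ℂ)⁻¹ * (-(cL m) + cH n * ((m - (n+γ) : ℤ) : ℂ)) = 0 := by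
    intro m n
    have key := hD (b (L m)) (b (H n))
    rw [(hW m n).2.1, map_smul, hcH (m+n), hcL m, hcH n] at key
    have e1 : ⁅b (I (m+γ)), b (H n)⁆ = -b (J (m+n+γ)) := by
      rw [← lie_skew, (hW n (m+γ)).2.2.2.2.1]
      have : n + (m+γ) = m+n+γ := by ring
      rw [this]
    have e2 : ⁅b (L m), b (J (n+γ))⁆ = ((m - (n+γ) : ℤ) : ℂ) • b (J (m+n+γ)) := by
      rw [(hW m (n+γ)).2.2.2.1]
      have : m + (n+γ) = m+n+γ := by ring
      rw [this]
    rw [lie_smul, smul_lie, e1, e2] at key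
    have : m + n + γ = m + n + γ := rfl
    have key2 : ((-(n:ℂ)) * cH (m+n) - (2:ℂ)⁻¹ * (-(cL m) + cH n * ((m - (n+γ) : ℤ) : ℂ)))
        • b (J (m+n+γ)) = 0 := by
      rw [sub_smul, mul_smul, mul_smul, key]
      module
    exact bne _ _ key2
  -- deduce cH 0 = 0
  have e00 := main 0 0
  have e01 := main 0 1
  rw [hHc (0+0) 0] at e00
  rw [hHc (0+1) 0, hHc 1 0] at e01
  push_cast at e00 e01
  have hc0 : cH 0 = 0 := by linear_combination 2*e00 - 2*e01
  -- deduce cL m = 0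
  have hcLz : ∀ m : ℤ, cL m = 0 := by
    intro m
    have e := main m 0
    rw [hHc (m+0) 0, hc0] at e
    push_cast at e
    linear_combination 2*e
  have hDL : ∀ m : ℤ, D (b (L m)) = 0 := by
    intro m; rw [hcL m, hcLz m, zero_smul]
  have hDH : ∀ m : ℤ, D (b (H m)) = 0 := by
    intro m; rw [hcH m, hHc m 0, hc0, zero_smul]
  apply b.ext
  intro i
  cases i with
  | L m => simpa using hDL m
  | H m => simpa using hDH m
  | I m => simpa using hDI m
  | J m => simpa using hDJ m
end

section
/- Every homogeneous ½-derivation of the planar Galilean conformal algebra W of degree (1̄,0̄,γ) is zero, for every γ ∈ ℤ. -/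
open PGIdx in
theorem homogeneous_half_derivation_deg10_is_zero
    (W : Type*) [LieRing W] [LieAlgebra ℂ W]
    (b : Module.Basis PGIdx ℂ W) (hW : IsPlanarGCA W b)
    (γ : ℤ)
    (D : W →ₗ[ℂ] W) (hD : IsHalfDerivation D)
    (hL : ∀ m : ℤ, ∃ c : ℂ, D (b (L m)) = c • b (J (m + γ)))
    (hH : ∀ m : ℤ, ∃ c : ℂ, D (b (H m)) = c • b (I (m + γ)))
    (hI : ∀ m : ℤ, ∃ c : ℂ, D (b (I m)) = c • b (H (m + γ)))
    (hJ : ∀ m : ℤ, ∃ c : ℂ, D (b (J m)) = c • b (L (m + γ))) :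
    D = 0 := by
  choose a ha using hL
  choose e he using hH
  choose c hc using hI
  choose d hd using hJ
  have hinj : ∀ (i : PGIdx) (x y : ℂ), x • b i = y • b i → x = y := by
    intro i x y h
    have h2 := congrArg (fun v => b.repr v i) h
    simpa using h2
  -- d = 0
  have hd0 : ∀ k : ℤ, d k = 0 := by
    intro k
    have h2 := hD (b (H k)) (b (I 0))
    rw [(hW k 0).2.2.2.2.1] at h2
    simp only [hd, he, hc, smul_lie, lie_smul,
      (hW (k+γ) 0).2.2.2.2.2.2.2.1, (hW k (0+γ)).2.2.2.2.2.2.1,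
      (hW k γ).2.2.2.2.2.2.1,
      smul_zero, add_zero, zero_add] at h2
    exact hinj (L (k+γ)) (d k) 0 (by rw [zero_smul]; simpa using h2)
  -- general equation from [L m, H n]
  have E2 : ∀ m n : ℤ, (-(n:ℂ)) * e (m+n) = (2:ℂ)⁻¹ * (a m + e n * ((m:ℂ) - n - γ)) := by
    intro m n
    have h2 := hD (b (L m)) (b (H n))
    rw [(hW m n).2.1] at h2
    have hJH : ⁅b (J (m+γ)), b (H n)⁆ = b (I (m+n+γ)) := by
      rw [← lie_skew, (hW n (m+γ)).2.2.2.2.2.1]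
      rw [show n+(m+γ) = m+n+γ by ring, neg_neg]
    rw [map_smul, he (m+n), ha m, he n, smul_lie, lie_smul, hJH,
      (hW m (n+γ)).2.2.1] at h2
    rw [show m+(n+γ) = m+n+γ by ring] at h2
    simp only [smul_smul, smul_add, ← add_smul] at h2
    have h3 := hinj _ _ _ h2
    push_cast at h3 ⊢
    linear_combination h3
  -- equation from [L m, L 0]
  have E1 : ∀ m : ℤ, 2*(m:ℂ) * a m = a m * ((m:ℂ)+γ) + a 0 * ((m:ℂ)-γ) := by
    intro m
    have h2 := hD (b (L m)) (b (L 0))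
    rw [(hW m 0).1] at h2
    have hJL : ⁅b (J (m+γ)), b (L 0)⁆ = (((m+γ:ℤ)):ℂ) • b (J (m+γ)) := by
      rw [← lie_skew, (hW 0 (m+γ)).2.2.2.1]
      rw [show (0:ℤ)+(m+γ) = m+γ by ring, ← neg_smul]
      push_cast
      ring_nf
    rw [map_smul, ha (m+0), ha m, ha 0, smul_lie, lie_smul, hJL,
      (hW m (0+γ)).2.2.2.1] at h2
    rw [show m+(0+γ) = m+γ by ring, show m+0 = m by ring] at h2
    simp only [smul_smul, smul_add, ← add_smul] at h2
    have h3 := hinj _ _ _ h2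
    push_cast at h3 ⊢
    linear_combination 2 * h3
  have k : ∀ m : ℤ, a m = -(e 0) * ((m:ℂ) - γ) := by
    intro m
    have h := E2 m 0
    push_cast at h
    linear_combination -2 * h
  have he0' : e 0 = 0 := by
    have h1 := E1 (γ+1)
    have h2 := E1 (γ+2)
    rw [k (γ+1), k 0] at h1
    rw [k (γ+2), k 0] at h2
    push_cast at h1 h2
    linear_combination (2:ℂ)⁻¹ * (2*h1 - h2)
  have ha0 : ∀ m : ℤ, a m = 0 := by
    intro m
    rw [k m, he0']
    ring
  have he0 : ∀ n : ℤ, e n = 0 := by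
    have he' : ∀ n : ℤ, n ≠ γ → e n = 0 := by
      intro n hn
      have h := E2 0 n
      rw [ha0 0, zero_add] at h
      push_cast at h
      have hnγ : (n:ℂ) - γ ≠ 0 := by
        intro hc
        apply hn
        have : (n:ℂ) = (γ:ℂ) := by linear_combination hc
        exact_mod_cast this
      have hz : e n * ((n:ℂ) - γ) = 0 := by linear_combination -2 * h
      rcases mul_eq_zero.mp hz with h' | h'
      · exact h'
      · exact absurd h' hnγ
    intro n
    rcases eq_or_ne n γ with rfl | hn
    · have h := E2 1 n
      rw [ha0 1, he' (1+n) (by omega)] at h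
      push_cast at h
      have hne : (1:ℂ) - n - n ≠ 0 := by
        intro hc
        have : ((1 - 2*n : ℤ) : ℂ) = 0 := by push_cast; linear_combination hc
        have h2 : (1 - 2*n : ℤ) = 0 := by exact_mod_cast this
        omega
      have hz : e n * ((1:ℂ) - n - n) = 0 := by linear_combination -2 * h
      rcases mul_eq_zero.mp hz with h' | h'
      · exact h'
      · exact absurd h' hne
    · exact he' n hn
  -- c = 0
  have hc0 : ∀ k : ℤ, c k = 0 := by
    intro k
    have h2 := hD (b (H k)) (b (J 0))
    rw [(hW k 0).2.2.2.2.2.1] at h2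
    simp only [hd, he, hc, hd0, he0, zero_smul, map_neg, smul_lie, lie_smul,
      lie_zero, zero_lie, smul_zero, add_zero, zero_add] at h2
    have h3 := hinj (H (k+0+γ)) (-(c (k+0))) 0
      (by rw [zero_smul, neg_smul]; simpa using h2)
    have h4 : c (k+0) = 0 := by linear_combination -h3
    simpa using h4
  apply b.ext
  intro i
  cases i with
  | L m => rw [LinearMap.zero_apply, ha m, ha0 m, zero_smul]
  | H m => rw [LinearMap.zero_apply, he m, he0 m, zero_smul]
  | I m => rw [LinearMap.zero_apply, hc m, hc0 m, zero_smul]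
  | J m => rw [LinearMap.zero_apply, hd m, hd0 m, zero_smul]
end

section
/- Every homogeneous ½-derivation of the planar Galilean conformal algebra W of degree (1̄,1̄,γ) is zero, for every γ ∈ ℤ. -/
open PGIdx in
theorem homogeneous_half_derivation_deg11_is_zero
    (W : Type*) [LieRing W] [LieAlgebra ℂ W]
    (b : Module.Basis PGIdx ℂ W) (hW : IsPlanarGCA W b)
    (γ : ℤ)
    (D : W →ₗ[ℂ] W) (hD : IsHalfDerivation D)
    (hL : ∀ m : ℤ, ∃ c : ℂ, D (b (L m)) = c • b (H (m + γ)))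
    (hH : ∀ m : ℤ, ∃ c : ℂ, D (b (H m)) = c • b (L (m + γ)))
    (hI : ∀ m : ℤ, ∃ c : ℂ, D (b (I m)) = c • b (J (m + γ)))
    (hJ : ∀ m : ℤ, ∃ c : ℂ, D (b (J m)) = c • b (I (m + γ))) :
    D = 0 := by
  classical
  have key : ∀ (c c' : ℂ) (k : PGIdx), c • b k = c' • b k → c = c' := by
    intro c c' k h
    have h2 : (c - c') • b k = 0 := by rw [sub_smul, h, sub_self]
    rcases smul_eq_zero.mp h2 with h3 | h3
    · exact sub_eq_zero.mp h3
    · exact absurd h3 (b.ne_zero k)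
  choose f hf using hL
  choose g hg using hH
  choose p hp using hI
  choose q hq using hJ
  -- equation from ⁅L m, H n⁆
  have eA : ∀ m n : ℤ, (-(n : ℂ)) * g (m + n) = (2 : ℂ)⁻¹ * (g n * ((m - (n + γ) : ℤ) : ℂ)) := by
    intro m n
    have h := hD (b (L m)) (b (H n))
    rw [(hW m n).2.1, map_smul, hg (m + n), hf m, hg n, smul_lie, lie_smul,
        (hW (m + γ) n).2.2.2.2.2.2.1, (hW m (n + γ)).1, smul_zero, zero_add,
        show m + (n + γ) = m + n + γ by ring] at h
    refine key _ _ (L (m + n + γ)) ?_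
    rw [smul_smul] at h
    rw [h]
    module
  -- g vanishes away from γ
  have gne : ∀ n : ℤ, n ≠ γ → g n = 0 := by
    intro n hn
    have h := eA 0 n
    rw [zero_add] at h
    push_cast at h
    have h2 : g n * ((γ : ℂ) - n) = 0 := by linear_combination 2 * h
    rcases mul_eq_zero.mp h2 with h3 | h3
    · exact h3
    · exfalso
      apply hn
      have : (γ : ℂ) = (n : ℂ) := sub_eq_zero.mp h3
      exact_mod_cast this.symm
  have g0 : ∀ n : ℤ, g n = 0 := by
    intro n
    by_cases hn : n = γ
    · subst hn
      have h := eA 1 n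
      rw [gne (1 + n) (by omega)] at h
      push_cast at h
      have hne : (1 : ℂ) - (n + n) ≠ 0 := by
        intro hc
        have : ((1 - (n + n) : ℤ) : ℂ) = 0 := by push_cast; linear_combination hc
        have : (1 - (n + n) : ℤ) = 0 := by exact_mod_cast this
        omega
      have h2 : g n * ((1 : ℂ) - (n + n)) = 0 := by linear_combination -2 * h
      rcases mul_eq_zero.mp h2 with h3 | h3
      · exact h3
      · exact absurd h3 hne
    · exact gne n hn
  have hg' : ∀ m : ℤ, D (b (H m)) = 0 := by
    intro m
    rw [hg m, g0, zero_smul]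
  -- equation from ⁅H m, I n⁆
  have eB : ∀ m n : ℤ, q (m + n) = -((2 : ℂ)⁻¹ * p n) := by
    intro m n
    have h := hD (b (H m)) (b (I n))
    rw [(hW m n).2.2.2.2.1, hq (m + n), hg' m, hp n, zero_lie, zero_add, lie_smul,
        (hW m (n + γ)).2.2.2.2.2.1,
        show m + (n + γ) = m + n + γ by ring] at h
    refine key _ _ (I (m + n + γ)) ?_
    rw [h]
    module
  -- equation from ⁅H m, J n⁆
  have eC : ∀ m n : ℤ, -(p (m + n)) = (2 : ℂ)⁻¹ * q n := by
    intro m n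
    have h := hD (b (H m)) (b (J n))
    rw [(hW m n).2.2.2.2.2.1, map_neg, hp (m + n), hg' m, hq n, zero_lie, zero_add, lie_smul,
        (hW m (n + γ)).2.2.2.2.1,
        show m + (n + γ) = m + n + γ by ring, ← neg_smul] at h
    refine key _ _ (J (m + n + γ)) ?_
    rw [h]
    module
  have p0 : ∀ n : ℤ, p n = 0 := by
    intro n
    have h1 := eB 0 n
    have h2 := eC 0 n
    rw [zero_add] at h1 h2
    linear_combination (-(4 : ℂ) / 3) * h2 - ((2 : ℂ) / 3) * h1
  have q0 : ∀ n : ℤ, q n = 0 := by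
    intro n
    have h1 := eB 0 n
    rw [zero_add, p0, mul_zero, neg_zero] at h1
    exact h1
  -- f vanishes, from ⁅L m, I n⁆
  have f0 : ∀ m : ℤ, f m = 0 := by
    intro m
    have h := hD (b (L m)) (b (I 0))
    rw [(hW m 0).2.2.1, map_smul, hp (m + 0), p0, zero_smul, smul_zero, hf m, hp 0, p0,
        zero_smul, lie_zero, add_zero, smul_lie, (hW (m + γ) 0).2.2.2.2.1] at h
    have h2 : (0 : ℂ) = (2 : ℂ)⁻¹ * f m := by
      refine key _ _ (J (m + γ + 0)) ?_
      rw [zero_smul, h]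
      module
    linear_combination -2 * h2
  refine b.ext fun i => ?_
  cases i with
  | L m => rw [hf m, f0, zero_smul]; rfl
  | H m => rw [hg', LinearMap.zero_apply]
  | I m => rw [hp m, p0, zero_smul]; rfl
  | J m => rw [hq m, q0, zero_smul]; rfl
end
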